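/- In the monoid F₀ one has π(η_0) * π(ε_0) ≠ 1 (although π(ε_0) * π(η_0) = 1); in particular F₀ is a monoid possessing a left-invertible element that is not right-invertible, arising as the initial object of the variety of adjunction structures. -/

import Mathlib

/-- The free monoid on the generators `η_k` and `ε_k` (`k ∈ ℕ`). -/
abbrev FreeAdj := FreeMonoid (Bool × ℕ)

/-- The generator `η_k`. -/
def ηgen (k : ℕ) : FreeAdj := FreeMonoid.of (true, k)

/-- The generator `ε_k`. -/
def εgen (k : ℕ) : FreeAdj := FreeMonoid.of (false, k)

/-- The set of relation pairs `R₀`. -/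
inductive R0 : FreeAdj → FreeAdj → Prop
  | ee {i j : ℕ} (h : i < j) : R0 (εgen i * εgen j) (εgen (j - 1) * εgen i)
  | hh {i j : ℕ} (h : i < j) : R0 (ηgen j * ηgen i) (ηgen i * ηgen (j - 1))
  | eh_gt {i j : ℕ} (h : i + 1 < j) : R0 (εgen i * ηgen j) (ηgen (j - 1) * εgen i)
  | eh_lt {i j : ℕ} (h : j < i) : R0 (εgen i * ηgen j) (ηgen j * εgen (i - 1))
  | eh_eq {i : ℕ} (h : 0 < i) : R0 (εgen i * ηgen i) (εgen (i - 1) * ηgen i)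
  | eh_succ (i : ℕ) : R0 (εgen i * ηgen (i + 1)) (εgen i * ηgen i)
  | eh_zero : R0 (εgen 0 * ηgen 0) 1

/-- The monoid `F₀`: the quotient of the free monoid by the congruence
generated by `R₀`. -/
abbrev F0 := (conGen R0).Quotient

/-- The quotient map `π : F →* F₀`. -/
def πmap : FreeAdj →* F0 := (conGen R0).mk'

/-- Model: act on ℕ by simplicial-like maps. -/
def genAct : Bool × ℕ → Function.End ℕ
  | (true, k) => fun n => if n < k then n else n + 1
  | (false, k) => fun n => if n ≤ k then n else n - 1

def φ : FreeAdj →* Function.End ℕ := FreeMonoid.lift genAct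

lemma φ_η (k : ℕ) : φ (ηgen k) = fun n => if n < k then n else n + 1 := by
  simp [φ, ηgen, genAct]; rfl

lemma φ_ε (k : ℕ) : φ (εgen k) = fun n => if n ≤ k then n else n - 1 := by
  simp [φ, εgen, genAct]; rfl

lemma mulEnd (f g : Function.End ℕ) (n : ℕ) : (f * g) n = f (g n) := rfl

lemma φ_inv {x y : FreeAdj} (h : R0 x y) : φ x = φ y := by
  cases h <;>
  · funext n
    simp only [map_mul, map_one, mulEnd]
    simp only [φ_η, φ_ε]
    first
    | (split_ifs <;> omega)
    | rfl

lemma φ_factor {x y : FreeAdj} (h : πmap x = πmap y) : φ x = φ y := by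
  have : conGen R0 ≤ Con.ker φ := Con.conGen_le.mpr fun a b hab => φ_inv hab
  exact this ((Con.eq _).mp h)

/-- In `F₀`, `π η₀ * π ε₀ ≠ 1` although `π ε₀ * π η₀ = 1`: the monoid `F₀`
has a left-invertible element which is not right-invertible. -/
theorem eta_eps_ne_one :
    πmap (ηgen 0) * πmap (εgen 0) ≠ 1 ∧ πmap (εgen 0) * πmap (ηgen 0) = 1 := by
  constructor
  · intro h
    have h' : πmap (ηgen 0 * εgen 0) = πmap 1 := by
      simpa [map_mul, map_one] using h
    have := congrFun (φ_factor h') 0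
    rw [map_mul, map_one] at this
    have e1 : (φ (ηgen 0) * φ (εgen 0)) 0 = 1 := by simp only [mulEnd]; simp [φ_η, φ_ε]
    have e2 : (1 : Function.End ℕ) 0 = 0 := rfl
    omega
  · have : πmap (εgen 0 * ηgen 0) = πmap 1 :=
      (Con.eq _).mpr (ConGen.Rel.of _ _ R0.eh_zero)
    simpa [map_mul, map_one] using this
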